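/- Let 0 < α < 2, n ≥ 2. Combining the estimates: for fixed x in the upper half space and fixed R with |x| < R, there is a constant C (depending on x, R, n, α, and a local bound on u) such that the quantity I₂₂ = ∫_{|y−x_r|>r, |y|≤R, y_n>0} ((2x_n r − |x|²)/(2y_n r − |y|²))^(α/2) |x − y|^(−(n+1)) dy satisfies I₂₂ ≤ C · r^(α/2 − 1) for all sufficiently large r; in particular I₂₂ → 0 as r → ∞. -/

import Mathlib

open MeasureTheory ENNReal

/-- The index of the last coordinate. -/
def lastIdx (n : ℕ) (hn : 2 ≤ n) : Fin n := ⟨n - 1, by omega⟩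

/-- The point `x_r = (0, …, 0, r)`. -/
noncomputable def xrPt (n : ℕ) (hn : 2 ≤ n) (r : ℝ) : EuclideanSpace ℝ (Fin n) :=
  EuclideanSpace.single (lastIdx n hn) r

/-- The quantity `I₂₂` from the proof of the Liouville theorem. -/
noncomputable def I22 (α : ℝ) (n : ℕ) (hn : 2 ≤ n)
    (x : EuclideanSpace ℝ (Fin n)) (R r : ℝ) : ℝ :=
  ∫ y in {y : EuclideanSpace ℝ (Fin n) |
      r < dist y (xrPt n hn r) ∧ ‖y‖ ≤ R ∧ 0 < y (lastIdx n hn)},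
    ((2 * x (lastIdx n hn) * r - ‖x‖ ^ 2) / (2 * y (lastIdx n hn) * r - ‖y‖ ^ 2)) ^ (α / 2) /
      dist x y ^ (n + 1)

lemma abs_coord_le {n : ℕ} (y : EuclideanSpace ℝ (Fin n)) (i : Fin n) : |y i| ≤ ‖y‖ := by
  rw [EuclideanSpace.norm_eq, ← Real.sqrt_sq_eq_abs]
  apply Real.sqrt_le_sqrt
  simp only [Real.norm_eq_abs, sq_abs]
  exact Finset.single_le_sum (f := fun j => y j ^ 2) (fun j _ => sq_nonneg _) (Finset.mem_univ i)


lemma norm_sq_coords {n : ℕ} (y : EuclideanSpace ℝ (Fin n)) : ‖y‖ ^ 2 = ∑ i, y i ^ 2 := by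
  rw [EuclideanSpace.norm_eq, Real.sq_sqrt (by positivity)]
  simp [Real.norm_eq_abs, sq_abs]

lemma dist_xr_sq {n : ℕ} (hn : 2 ≤ n) (y : EuclideanSpace ℝ (Fin n)) (r : ℝ) (hr : 0 ≤ r) :
    dist y (xrPt n hn r) ^ 2 = ‖y‖ ^ 2 - 2 * y (lastIdx n hn) * r + r ^ 2 := by
  rw [dist_eq_norm, norm_sub_sq_real, xrPt]
  rw [EuclideanSpace.inner_single_right, EuclideanSpace.norm_single]
  simp [Real.norm_eq_abs, abs_of_nonneg hr]
  ring

lemma lemA {β c : ℝ} (hβ1 : β < 1) (hc : 0 ≤ c) :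
    ∫⁻ t in Set.Ioo 0 c, ENNReal.ofReal ((c - t) ^ (-β)) ≤
      ENNReal.ofReal (c ^ (1 - β) / (1 - β)) := by
  have hJ : IntervalIntegrable (fun u : ℝ => u ^ (-β)) volume 0 c :=
    intervalIntegral.intervalIntegrable_rpow' (by linarith)
  have hJ2 : IntervalIntegrable (fun t : ℝ => (c - t) ^ (-β)) volume 0 c := by
    have := hJ.comp_sub_left c
    simpa using this.symm
  have hInt : IntegrableOn (fun t : ℝ => (c - t) ^ (-β)) (Set.Ioo 0 c) volume :=
    ((intervalIntegrable_iff_integrableOn_Ioc_of_le hc).mp hJ2).mono_set Set.Ioo_subset_Ioc_self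
  have hval : (∫ t in Set.Ioo 0 c, (c - t) ^ (-β)) = c ^ (1 - β) / (1 - β) := by
    rw [← integral_Ioc_eq_integral_Ioo, ← intervalIntegral.integral_of_le hc]
    rw [intervalIntegral.integral_comp_sub_left (fun u : ℝ => u ^ (-β)) c]
    simp only [sub_self, sub_zero]
    rw [integral_rpow (Or.inl (by linarith))]
    rw [Real.zero_rpow (by linarith)]
    ring_nf
  rw [← ofReal_integral_eq_lintegral_ofReal hInt]
  · rw [hval]
  · filter_upwards [ae_restrict_mem measurableSet_Ioo] with t ht
    exact Real.rpow_nonneg (by linarith [ht.2]) _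

lemma arith_pos {d r A : ℝ} (hr0 : 0 ≤ r) (h : r < d) (hd2 : d ^ 2 = A + r ^ 2) : 0 < A := by
  nlinarith

lemma arith1 {t s r R σ : ℝ} (hr0 : 0 < r) (hR0 : 0 < R) (hr2R : 2 * R ≤ r)
    (htpos : 0 < t) (hn2 : t ^ 2 + s ≤ R ^ 2) (hDpos : 0 < t ^ 2 + s - 2 * t * r)
    (hσ0 : 0 ≤ σ) (hσsq : σ ^ 2 = r ^ 2 - s) :
    t < r - σ ∧ (r - σ - t) * r ≤ t ^ 2 + s - 2 * t * r := by
  have hsR : s ≤ R ^ 2 := by nlinarith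
  have hσhalf : r / 2 ≤ σ := by
    have h5 : (r / 2) ^ 2 ≤ σ ^ 2 := by nlinarith
    nlinarith
  have htsmall : t * (2 * r) < R ^ 2 := by nlinarith
  have htr2 : t ≤ r / 2 := by
    have h5 : t * (2 * r) < (r / 2) * (2 * r) := by nlinarith
    exact ((mul_lt_mul_iff_left₀ (by positivity : (0:ℝ) < 2 * r)).mp h5).le
  have htc : t < r - σ := by
    by_contra hcon
    push_neg at hcon
    nlinarith
  refine ⟨htc, ?_⟩
  have hfact : t ^ 2 + s - 2 * t * r = (r - σ - t) * (r + σ - t) := by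
    linear_combination hσsq
  rw [hfact]
  exact mul_le_mul_of_nonneg_left (by linarith) (by linarith)

lemma arith2 {s r R σ : ℝ} (hr0 : 0 < r) (hR0 : 0 < R) (hr2R : 2 * R ≤ r)
    (hs0 : 0 ≤ s) (hsR : s ≤ R ^ 2) (hσ0 : 0 ≤ σ) (hσsq : σ ^ 2 = r ^ 2 - s) :
    0 ≤ r - σ ∧ r - σ ≤ R ^ 2 / r := by
  have hσr : σ ≤ r := by nlinarith
  refine ⟨by linarith, ?_⟩
  rw [le_div_iff₀ hr0]
  nlinarith

lemma lintegral_bound {m : ℕ} (hn : 2 ≤ m + 2) {β R r K₀ : ℝ} (hβ0 : 0 < β) (hβ1 : β < 1)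
    (hK₀ : 0 ≤ K₀) (hR0 : 0 < R) (hr2R : 2 * R ≤ r) (hr0 : 0 < r) :
    ∫⁻ y, ({y : EuclideanSpace ℝ (Fin (m + 2)) |
        r < dist y (xrPt (m + 2) hn r) ∧ ‖y‖ ≤ R ∧ 0 < y (lastIdx (m + 2) hn)}).indicator
        (fun y => ENNReal.ofReal
            (K₀ * r ^ β * (‖y‖ ^ 2 - 2 * y (lastIdx (m + 2) hn) * r) ^ (-β))) y ≤
      ENNReal.ofReal (K₀ * ((R ^ 2 / r) ^ (1 - β) / (1 - β)) * (2 * R) ^ (m + 1)) := by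
  set i := lastIdx (m + 2) hn with hidef
  have hRr : R ≤ r := by linarith
  have hR2r2 : R ^ 2 ≤ r ^ 2 := by nlinarith
  set S : Set (EuclideanSpace ℝ (Fin (m + 2))) :=
    {y | r < dist y (xrPt (m + 2) hn r) ∧ ‖y‖ ≤ R ∧ 0 < y i} with hSdef
  set F : EuclideanSpace ℝ (Fin (m + 2)) → ℝ≥0∞ :=
    S.indicator (fun y => ENNReal.ofReal (K₀ * r ^ β * (‖y‖ ^ 2 - 2 * y i * r) ^ (-β)))
    with hFdef
  -- the transport maps
  set e₁ := (MeasurableEquiv.toLp 2 (Fin (m + 2) → ℝ)).symm with he₁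
  set e₂ := MeasurableEquiv.piFinSuccAbove (fun _ : Fin (m + 2) => ℝ) i with he₂
  set Φ : ℝ × (Fin (m + 1) → ℝ) → EuclideanSpace ℝ (Fin (m + 2)) :=
    fun z => e₁.symm (e₂.symm z) with hΦdef
  have hΦmp : MeasurePreserving Φ (volume.prod volume) volume := by
    have h1 : MeasurePreserving e₂.symm (volume.prod volume) volume := by
      have := (measurePreserving_piFinSuccAbove (fun _ : Fin (m + 2) => volume) i).symm e₂
      simpa [volume_pi] using this
    exact ((EuclideanSpace.volume_preserving_symm_measurableEquiv_toLp _).symm e₁).comp h1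
  have hΦcoord : ∀ z : ℝ × (Fin (m + 1) → ℝ), Φ z i = z.1 := by
    intro z
    simp [hΦdef, he₁, he₂, MeasurableEquiv.coe_toLp]
  have hΦsucc : ∀ (z : ℝ × (Fin (m + 1) → ℝ)) (j : Fin (m + 1)),
      Φ z (i.succAbove j) = z.2 j := by
    intro z j
    simp [hΦdef, he₁, he₂, MeasurableEquiv.coe_toLp]
  have hΦnorm : ∀ z : ℝ × (Fin (m + 1) → ℝ), ‖Φ z‖ ^ 2 = z.1 ^ 2 + ∑ j, z.2 j ^ 2 := by
    intro z
    rw [norm_sq_coords, Fin.sum_univ_succAbove (fun k => Φ z k ^ 2) i]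
    simp [hΦcoord z, hΦsucc z]
  have htrans : ∫⁻ y, F y = ∫⁻ z, F (Φ z) ∂(volume.prod volume) :=
    (hΦmp.lintegral_comp_emb
      (e₁.symm.measurableEmbedding.comp e₂.symm.measurableEmbedding) F).symm
  -- the product-side majorant
  set cf : (Fin (m + 1) → ℝ) → ℝ := fun y' => r - Real.sqrt (r ^ 2 - ∑ j, y' j ^ 2) with hcfdef
  have hcf_cont : Continuous cf :=
    continuous_const.sub (Real.continuous_sqrt.comp
      (continuous_const.sub (continuous_finset_sum _ fun j _ => (continuous_apply j).pow 2)))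
  set T : Set (ℝ × (Fin (m + 1) → ℝ)) :=
    {p | (∑ j, p.2 j ^ 2 ≤ R ^ 2) ∧ (∀ j, |p.2 j| ≤ R) ∧ 0 < p.1 ∧ p.1 < cf p.2} with hTdef
  have hsum_cont : Continuous fun p : ℝ × (Fin (m + 1) → ℝ) => ∑ j, p.2 j ^ 2 :=
    (continuous_finset_sum _ fun j _ => (continuous_apply j).pow 2).comp continuous_snd
  have hTm : MeasurableSet T := by
    have h1 : MeasurableSet {p : ℝ × (Fin (m + 1) → ℝ) | ∑ j, p.2 j ^ 2 ≤ R ^ 2} :=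
      measurableSet_le hsum_cont.measurable measurable_const
    have h2 : MeasurableSet {p : ℝ × (Fin (m + 1) → ℝ) | ∀ j, |p.2 j| ≤ R} := by
      rw [Set.setOf_forall]
      exact MeasurableSet.iInter fun j => measurableSet_le
        (((continuous_apply j).comp continuous_snd).abs.measurable) measurable_const
    have h3 : MeasurableSet {p : ℝ × (Fin (m + 1) → ℝ) | 0 < p.1} :=
      measurableSet_lt measurable_const measurable_fst
    have h4 : MeasurableSet {p : ℝ × (Fin (m + 1) → ℝ) | p.1 < cf p.2} :=
      measurableSet_lt measurable_fst ((hcf_cont.comp continuous_snd).measurable)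
    exact (h1.inter (h2.inter (h3.inter h4)) : _)
  set g : ℝ × (Fin (m + 1) → ℝ) → ℝ≥0∞ :=
    T.indicator (fun p => ENNReal.ofReal (K₀ * (cf p.2 - p.1) ^ (-β))) with hgdef
  have hgm : Measurable g := by
    apply Measurable.indicator ?_ hTm
    have h1 : Measurable fun v : ℝ => ENNReal.ofReal (K₀ * v ^ (-β)) := by fun_prop
    exact h1.comp ((hcf_cont.comp continuous_snd).sub continuous_fst).measurable
  -- pointwise comparison on the product side
  have hptw : ∀ z, F (Φ z) ≤ g z := by
    intro z
    by_cases hz : Φ z ∈ S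
    · obtain ⟨hz1, hz2, hz3⟩ := id hz
      have hco := hΦcoord z
      have hno := hΦnorm z
      set t := z.1 with htdef
      set s := ∑ j, z.2 j ^ 2 with hsdef
      have htpos : 0 < t := by rw [hco] at hz3; exact hz3
      have hn2 : t ^ 2 + s ≤ R ^ 2 := by
        rw [← hno]
        exact pow_le_pow_left₀ (norm_nonneg _) hz2 2
      have hsR : s ≤ R ^ 2 := by linarith [sq_nonneg t]
      have hDpos : 0 < t ^ 2 + s - 2 * t * r := by
        have hd := dist_xr_sq hn (Φ z) r hr0.le
        rw [hno, hco] at hd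
        exact arith_pos hr0.le hz1 (by linarith [hd])
      have hsr2 : s ≤ r ^ 2 := le_trans hsR hR2r2
      set σ := Real.sqrt (r ^ 2 - s) with hσdef
      have hσ0 : 0 ≤ σ := Real.sqrt_nonneg _
      have hσsq : σ ^ 2 = r ^ 2 - s := Real.sq_sqrt (by linarith)
      have hcfz : cf z.2 = r - σ := by rw [hcfdef, hσdef, hsdef]
      obtain ⟨htc', hprod'⟩ := arith1 hr0 hR0 hr2R htpos hn2 hDpos hσ0 hσsq
      have htc : t < cf z.2 := by rw [hcfz]; exact htc'
      have hprod : (cf z.2 - t) * r ≤ t ^ 2 + s - 2 * t * r := by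
        rw [hcfz]; exact hprod'
      have hmem : z ∈ T := by
        refine ⟨hsR, fun j => ?_, htpos, htc⟩
        have hj : z.2 j ^ 2 ≤ s := Finset.single_le_sum
          (f := fun k => z.2 k ^ 2) (fun k _ => sq_nonneg _) (Finset.mem_univ j)
        rw [← Real.sqrt_sq_eq_abs, ← Real.sqrt_sq hR0.le]
        exact Real.sqrt_le_sqrt (by linarith)
      have hFz : F (Φ z) =
          ENNReal.ofReal (K₀ * r ^ β * (‖Φ z‖ ^ 2 - 2 * Φ z i * r) ^ (-β)) :=
        Set.indicator_of_mem hz _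
      rw [hFz, hgdef, Set.indicator_of_mem hmem]
      apply ENNReal.ofReal_le_ofReal
      rw [hno, hco]
      have hcft : 0 < cf z.2 - t := by linarith
      have h8 : (t ^ 2 + s - 2 * t * r) ^ (-β) ≤ ((cf z.2 - t) * r) ^ (-β) :=
        Real.rpow_le_rpow_of_nonpos (by positivity) hprod (by linarith)
      have h9 : r ^ β * r ^ (-β) = 1 := by
        rw [← Real.rpow_add hr0]; simp
      calc K₀ * r ^ β * (t ^ 2 + s - 2 * t * r) ^ (-β)
          ≤ K₀ * r ^ β * ((cf z.2 - t) * r) ^ (-β) := by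
            apply mul_le_mul_of_nonneg_left h8
            have := Real.rpow_nonneg hr0.le β
            positivity
        _ = K₀ * (cf z.2 - t) ^ (-β) * (r ^ β * r ^ (-β)) := by
            rw [Real.mul_rpow hcft.le hr0.le]; ring
        _ = K₀ * (cf z.2 - t) ^ (-β) := by rw [h9, mul_one]
    · rw [hFdef, Set.indicator_of_notMem hz]
      exact zero_le
  -- bound the product-side integral
  set box : Set (Fin (m + 1) → ℝ) := Set.pi Set.univ fun _ => Set.Icc (-R) R with hboxdef
  have hboxm : MeasurableSet box := MeasurableSet.univ_pi fun _ => measurableSet_Icc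
  set W : ℝ := K₀ * ((R ^ 2 / r) ^ (1 - β) / (1 - β)) with hWdef
  have hW0 : 0 ≤ W := by
    have := Real.rpow_nonneg (by positivity : (0:ℝ) ≤ R ^ 2 / r) (1 - β)
    have h1β : (0:ℝ) < 1 - β := by linarith
    positivity
  have hinner : ∀ y', ∫⁻ t, g (t, y') ≤ box.indicator (fun _ => ENNReal.ofReal W) y' := by
    intro y'
    by_cases hy' : (∑ j, y' j ^ 2 ≤ R ^ 2) ∧ (∀ j, |y' j| ≤ R)
    · set s := ∑ j, y' j ^ 2 with hsdef
      have hsR := hy'.1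
      have hs0 : 0 ≤ s := Finset.sum_nonneg fun j _ => sq_nonneg _
      have hsr2 : s ≤ r ^ 2 := le_trans hsR hR2r2
      set σ := Real.sqrt (r ^ 2 - s) with hσdef
      have hσ0 : 0 ≤ σ := Real.sqrt_nonneg _
      have hσsq : σ ^ 2 = r ^ 2 - s := Real.sq_sqrt (by linarith)
      have hcfy : cf y' = r - σ := by rw [hcfdef, hσdef, hsdef]
      obtain ⟨hcf0', hcr'⟩ := arith2 hr0 hR0 hr2R hs0 hsR hσ0 hσsq
      have hcf0 : 0 ≤ cf y' := by rw [hcfy]; exact hcf0'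
      have hcr : cf y' ≤ R ^ 2 / r := by rw [hcfy]; exact hcr'
      have heq : ∀ t, g (t, y') =
          (Set.Ioo 0 (cf y')).indicator (fun t => ENNReal.ofReal (K₀ * (cf y' - t) ^ (-β))) t := by
        intro t
        by_cases ht : t ∈ Set.Ioo 0 (cf y')
        · rw [Set.indicator_of_mem ht, hgdef,
            Set.indicator_of_mem (show (t, y') ∈ T from ⟨hy'.1, hy'.2, ht.1, ht.2⟩)]
        · rw [Set.indicator_of_notMem ht, hgdef, Set.indicator_of_notMem]
          intro hmem
          exact ht ⟨hmem.2.2.1, hmem.2.2.2⟩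
      have hboxmem : y' ∈ box := by
        intro j _
        exact abs_le.mp (hy'.2 j)
      rw [Set.indicator_of_mem hboxmem]
      calc ∫⁻ t, g (t, y')
          = ∫⁻ t in Set.Ioo 0 (cf y'), ENNReal.ofReal (K₀ * (cf y' - t) ^ (-β)) := by
            rw [lintegral_congr heq, lintegral_indicator measurableSet_Ioo]
        _ = ENNReal.ofReal K₀ * ∫⁻ t in Set.Ioo 0 (cf y'), ENNReal.ofReal ((cf y' - t) ^ (-β)) := by
            simp_rw [ENNReal.ofReal_mul hK₀]
            rw [lintegral_const_mul' _ _ ENNReal.ofReal_ne_top]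
        _ ≤ ENNReal.ofReal K₀ * ENNReal.ofReal ((cf y') ^ (1 - β) / (1 - β)) :=
            mul_le_mul_right (lemA hβ1 hcf0) _
        _ ≤ ENNReal.ofReal K₀ * ENNReal.ofReal ((R ^ 2 / r) ^ (1 - β) / (1 - β)) := by
            apply mul_le_mul_right
            apply ENNReal.ofReal_le_ofReal
            rw [div_eq_mul_inv, div_eq_mul_inv]
            exact mul_le_mul_of_nonneg_right (Real.rpow_le_rpow hcf0 hcr (by linarith))
              (inv_nonneg.mpr (by linarith))
        _ = ENNReal.ofReal W := by rw [hWdef, ← ENNReal.ofReal_mul hK₀]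
    · have hzero : ∀ t, g (t, y') = 0 := by
        intro t
        rw [hgdef, Set.indicator_of_notMem]
        intro hmem
        exact hy' ⟨hmem.1, hmem.2.1⟩
      rw [lintegral_congr hzero]
      simp
  calc ∫⁻ y, F y = ∫⁻ z, F (Φ z) ∂(volume.prod volume) := htrans
    _ ≤ ∫⁻ z, g z ∂(volume.prod volume) := lintegral_mono hptw
    _ = ∫⁻ y', ∫⁻ t, g (t, y') := lintegral_prod_symm g hgm.aemeasurable
    _ ≤ ∫⁻ y', box.indicator (fun _ => ENNReal.ofReal W) y' := lintegral_mono hinner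
    _ = ENNReal.ofReal W * volume box := lintegral_indicator_const hboxm _
    _ = ENNReal.ofReal W * ENNReal.ofReal (2 * R) ^ (m + 1) := by
        rw [hboxdef, volume_pi_pi]
        simp only [Real.volume_Icc, sub_neg_eq_add]
        rw [Finset.prod_const, Finset.card_univ, Fintype.card_fin]
        congr 2
        ring
    _ = ENNReal.ofReal (K₀ * ((R ^ 2 / r) ^ (1 - β) / (1 - β)) * (2 * R) ^ (m + 1)) := by
        rw [← ENNReal.ofReal_pow (by linarith), ← ENNReal.ofReal_mul hW0, hWdef]

lemma pointwise_bound {n : ℕ} (hn : 2 ≤ n) (x y : EuclideanSpace ℝ (Fin n))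
    {R r β : ℝ} (hβ0 : 0 < β) (hr0 : 0 < r)
    (hxt0 : 0 < x (lastIdx n hn)) (hrN : ‖x‖ ^ 2 < 2 * x (lastIdx n hn) * r)
    (hrR2 : 2 * R ^ 2 ≤ x (lastIdx n hn) * r)
    (hy1 : r < dist y (xrPt n hn r)) (hy2 : ‖y‖ ≤ R) :
    ‖((2 * x (lastIdx n hn) * r - ‖x‖ ^ 2) / (2 * y (lastIdx n hn) * r - ‖y‖ ^ 2)) ^ β /
        dist x y ^ (n + 1)‖ ≤
      ((2 * x (lastIdx n hn)) ^ β * (2 / x (lastIdx n hn)) ^ (n + 1)) * r ^ β *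
        (‖y‖ ^ 2 - 2 * y (lastIdx n hn) * r) ^ (-β) := by
  set i := lastIdx n hn
  set xt := x i with hxtdef
  set yt := y i with hytdef
  have hdist2 : dist y (xrPt n hn r) ^ 2 = ‖y‖ ^ 2 - 2 * yt * r + r ^ 2 :=
    dist_xr_sq hn y r hr0.le
  have hdn : (0:ℝ) ≤ dist y (xrPt n hn r) := dist_nonneg
  have hDpos : 0 < ‖y‖ ^ 2 - 2 * yt * r := by nlinarith
  have hyR2 : ‖y‖ ^ 2 ≤ R ^ 2 := by nlinarith [norm_nonneg y]
  have hyt4 : yt < xt / 4 := by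
    have h4 : yt * 4 * r < xt * r := by linarith
    have := (mul_lt_mul_iff_left₀ hr0).mp h4
    linarith
  have hdistxy : xt / 2 ≤ dist x y := by
    have h1 : |(x - y) i| ≤ ‖x - y‖ := abs_coord_le _ i
    have h2 : (x - y) i = xt - yt := rfl
    rw [dist_eq_norm]
    calc xt / 2 ≤ xt - yt := by linarith
      _ ≤ |(x - y) i| := by rw [h2]; exact le_abs_self _
      _ ≤ ‖x - y‖ := h1
  have hdpow : (xt / 2) ^ (n + 1) ≤ dist x y ^ (n + 1) :=
    pow_le_pow_left₀ (by positivity) hdistxy _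
  have hN0 : (0:ℝ) ≤ 2 * xt * r - ‖x‖ ^ 2 := by linarith
  have key1 : |((2 * xt * r - ‖x‖ ^ 2) / (2 * yt * r - ‖y‖ ^ 2)) ^ β| ≤
      (2 * xt) ^ β * r ^ β * (‖y‖ ^ 2 - 2 * yt * r) ^ (-β) := by
    refine (Real.abs_rpow_le_abs_rpow _ _).trans ?_
    have habs : |(2 * xt * r - ‖x‖ ^ 2) / (2 * yt * r - ‖y‖ ^ 2)| =
        (2 * xt * r - ‖x‖ ^ 2) / (‖y‖ ^ 2 - 2 * yt * r) := by
      rw [abs_div, abs_of_nonneg hN0, abs_of_neg (by linarith : 2 * yt * r - ‖y‖ ^ 2 < 0)]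
      congr 1; ring
    rw [habs]
    calc ((2 * xt * r - ‖x‖ ^ 2) / (‖y‖ ^ 2 - 2 * yt * r)) ^ β
        ≤ ((2 * xt * r) / (‖y‖ ^ 2 - 2 * yt * r)) ^ β := by
          apply Real.rpow_le_rpow (by positivity) ?_ hβ0.le
          gcongr
          linarith [sq_nonneg ‖x‖]
      _ = (2 * xt) ^ β * r ^ β * (‖y‖ ^ 2 - 2 * yt * r) ^ (-β) := by
          rw [Real.div_rpow (by positivity) hDpos.le, Real.rpow_neg hDpos.le,
            Real.mul_rpow (by linarith) hr0.le]
          ring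
  have hfy : ‖((2 * xt * r - ‖x‖ ^ 2) / (2 * yt * r - ‖y‖ ^ 2)) ^ β / dist x y ^ (n + 1)‖ =
      |((2 * xt * r - ‖x‖ ^ 2) / (2 * yt * r - ‖y‖ ^ 2)) ^ β| / dist x y ^ (n + 1) := by
    rw [Real.norm_eq_abs, abs_div, abs_of_nonneg (by positivity : (0:ℝ) ≤ dist x y ^ (n + 1))]
  rw [hfy]
  have hb_nonneg : (0:ℝ) ≤ (2 * xt) ^ β * r ^ β * (‖y‖ ^ 2 - 2 * yt * r) ^ (-β) := by
    have := Real.rpow_nonneg hDpos.le (-β); positivity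
  calc |((2 * xt * r - ‖x‖ ^ 2) / (2 * yt * r - ‖y‖ ^ 2)) ^ β| / dist x y ^ (n + 1)
      ≤ ((2 * xt) ^ β * r ^ β * (‖y‖ ^ 2 - 2 * yt * r) ^ (-β)) / (xt / 2) ^ (n + 1) :=
        div_le_div₀ hb_nonneg key1 (by positivity) hdpow
    _ = ((2 * xt) ^ β * (2 / xt) ^ (n + 1)) * r ^ β * (‖y‖ ^ 2 - 2 * yt * r) ^ (-β) := by
        rw [div_eq_mul_inv, ← inv_pow, inv_div]
        ring


lemma key_bound (α : ℝ) (hα0 : 0 < α) (hα2 : α < 2) (n : ℕ) (hn : 2 ≤ n)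
    (x : EuclideanSpace ℝ (Fin n)) (hx : 0 < x (lastIdx n hn))
    (R : ℝ) (hR : ‖x‖ < R) :
    ∃ C > (0:ℝ), ∃ r₀ : ℝ, 1 ≤ r₀ ∧
      ∀ r ≥ r₀, |I22 α n hn x R r| ≤ C * r ^ (α / 2 - 1) := by
  obtain ⟨m, rfl⟩ : ∃ m, n = m + 2 := ⟨n - 2, by omega⟩
  set i : Fin (m + 2) := lastIdx (m + 2) hn with hidef
  set β := α / 2 with hβdef
  have hβ0 : 0 < β := by simp only [hβdef]; linarith
  have hβ1 : β < 1 := by simp only [hβdef]; linarith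
  set xt := x i with hxtdef
  have hxt0 : 0 < xt := hx
  have hR0 : 0 < R := by
    have h1 := abs_coord_le x i
    have h2 := le_abs_self (x i)
    simp only [← hxtdef] at h1 h2 ⊢
    linarith
  set K₀ := (2 * xt) ^ β * (2 / xt) ^ (m + 2 + 1) with hK₀def
  have hK₀0 : 0 < K₀ :=
    mul_pos (Real.rpow_pos_of_pos (by linarith) _) (pow_pos (by positivity) _)
  have h1β : 0 < 1 - β := by linarith
  set C := K₀ * ((R ^ 2) ^ (1 - β) / (1 - β)) * (2 * R) ^ (m + 1) with hCdef
  have hC0 : 0 < C := by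
    have hr2 : (0:ℝ) < (R ^ 2) ^ (1 - β) := Real.rpow_pos_of_pos (by positivity) _
    positivity
  refine ⟨C, hC0, 1 + 2 * R + ‖x‖ ^ 2 / xt + 2 * R ^ 2 / xt, ?_, fun r hr => ?_⟩
  · have t1 : 0 ≤ ‖x‖ ^ 2 / xt := by positivity
    have t2 : 0 ≤ 2 * R ^ 2 / xt := by positivity
    linarith
  have t1 : 0 ≤ ‖x‖ ^ 2 / xt := by positivity
  have t2 : 0 ≤ 2 * R ^ 2 / xt := by positivity
  have hr1 : (1:ℝ) ≤ r := by linarith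
  have hr0 : (0:ℝ) < r := by linarith
  have hr2R : 2 * R ≤ r := by linarith
  have hRr : R ≤ r := by linarith
  have hrN : ‖x‖ ^ 2 < 2 * xt * r := by
    have e1 : xt * (‖x‖ ^ 2 / xt) = ‖x‖ ^ 2 := by field_simp
    have e2 : 1 + ‖x‖ ^ 2 / xt ≤ r := by linarith
    nlinarith [mul_le_mul_of_nonneg_left e2 hxt0.le]
  have hrR2 : 2 * R ^ 2 ≤ xt * r := by
    have e1 : xt * (2 * R ^ 2 / xt) = 2 * R ^ 2 := by field_simp
    have e2 : 2 * R ^ 2 / xt ≤ r := by linarith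
    nlinarith [mul_le_mul_of_nonneg_left e2 hxt0.le]
  set S : Set (EuclideanSpace ℝ (Fin (m + 2))) :=
    {y | r < dist y (xrPt (m + 2) hn r) ∧ ‖y‖ ≤ R ∧ 0 < y i} with hSdef
  set f : EuclideanSpace ℝ (Fin (m + 2)) → ℝ := fun y =>
    ((2 * xt * r - ‖x‖ ^ 2) / (2 * y i * r - ‖y‖ ^ 2)) ^ β / dist x y ^ (m + 2 + 1) with hfdef
  have hSm : MeasurableSet S := by
    have h1 : MeasurableSet {y : EuclideanSpace ℝ (Fin (m + 2)) | r < dist y (xrPt (m+2) hn r)} :=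
      measurableSet_lt measurable_const (continuous_id.dist continuous_const).measurable
    have h2 : MeasurableSet {y : EuclideanSpace ℝ (Fin (m + 2)) | ‖y‖ ≤ R} :=
      measurableSet_le continuous_norm.measurable measurable_const
    have h3 : MeasurableSet {y : EuclideanSpace ℝ (Fin (m + 2)) | 0 < y i} :=
      measurableSet_lt measurable_const (EuclideanSpace.proj i).continuous.measurable
    exact (h1.inter (h2.inter h3) : _)
  -- step 1 : reduce to a lintegral
  have step1 : |∫ y in S, f y| ≤
      (∫⁻ y in S, ENNReal.ofReal ‖f y‖).toReal := by
    rw [← Real.norm_eq_abs]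
    exact norm_integral_le_lintegral_norm f
  have hI : |I22 α (m + 2) hn x R r| ≤ (∫⁻ y in S, ENNReal.ofReal ‖f y‖).toReal := by
    simp only [I22]
    rw [← hβdef, ← hidef, ← hxtdef]
    exact step1
  -- step 2 : pointwise comparison
  have step2 : ∫⁻ y in S, ENNReal.ofReal ‖f y‖ ≤
      ∫⁻ y, S.indicator
        (fun y => ENNReal.ofReal (K₀ * r ^ β * (‖y‖ ^ 2 - 2 * y i * r) ^ (-β))) y := by
    rw [← lintegral_indicator hSm]
    refine lintegral_mono fun y => ?_
    by_cases hy : y ∈ S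
    · rw [Set.indicator_of_mem hy, Set.indicator_of_mem hy]
      apply ENNReal.ofReal_le_ofReal
      obtain ⟨hy1, hy2, hy3⟩ := id hy
      exact pointwise_bound hn x y hβ0 hr0 hxt0 hrN hrR2 hy1 hy2
    · rw [Set.indicator_of_notMem hy, Set.indicator_of_notMem hy]
  -- step 3 : the lintegral bound
  have step3 := lintegral_bound hn hβ0 hβ1 hK₀0.le hR0 hr2R hr0 (K₀ := K₀)
  have step4 : (∫⁻ y in S, ENNReal.ofReal ‖f y‖).toReal ≤
      K₀ * ((R ^ 2 / r) ^ (1 - β) / (1 - β)) * (2 * R) ^ (m + 1) := by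
    apply ENNReal.toReal_le_of_le_ofReal
    · have := Real.rpow_nonneg (show (0:ℝ) ≤ R ^ 2 / r by positivity) (1 - β)
      positivity
    · exact le_trans step2 step3
  have hWeq : K₀ * ((R ^ 2 / r) ^ (1 - β) / (1 - β)) * (2 * R) ^ (m + 1) = C * r ^ (β - 1) := by
    rw [hCdef, Real.div_rpow (by positivity) hr0.le, show β - 1 = -(1 - β) by ring,
      Real.rpow_neg hr0.le]
    have h2 : (r : ℝ) ^ (1 - β) ≠ 0 := (Real.rpow_pos_of_pos hr0 _).ne'
    field_simp
  calc |I22 α (m + 2) hn x R r| ≤ (∫⁻ y in S, ENNReal.ofReal ‖f y‖).toReal := hI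
    _ ≤ K₀ * ((R ^ 2 / r) ^ (1 - β) / (1 - β)) * (2 * R) ^ (m + 1) := step4
    _ = C * r ^ (β - 1) := hWeq

theorem stmt_14 (α : ℝ) (hα0 : 0 < α) (hα2 : α < 2) (n : ℕ) (hn : 2 ≤ n)
    (x : EuclideanSpace ℝ (Fin n)) (hx : 0 < x (lastIdx n hn))
    (R : ℝ) (hR : ‖x‖ < R) :
    (∃ C > (0:ℝ), ∃ r₀ : ℝ, ∀ r ≥ r₀, I22 α n hn x R r ≤ C * r ^ (α / 2 - 1)) ∧
    Filter.Tendsto (fun r : ℝ => I22 α n hn x R r) Filter.atTop (nhds 0) := by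
  obtain ⟨C, hC0, r₀, hr₀1, hkey⟩ := key_bound α hα0 hα2 n hn x hx R hR
  constructor
  · exact ⟨C, hC0, r₀, fun r hr => (le_abs_self _).trans (hkey r hr)⟩
  · have hfun : (fun r : ℝ => C * r ^ (α / 2 - 1)) = fun r : ℝ => C * r ^ (-(1 - α / 2)) := by
      ext r; rw [show α / 2 - 1 = -(1 - α / 2) by ring]
    have htend : Filter.Tendsto (fun r : ℝ => C * r ^ (α / 2 - 1)) Filter.atTop (nhds 0) := by
      rw [hfun]
      have := (tendsto_rpow_neg_atTop (by linarith : (0:ℝ) < 1 - α / 2)).const_mul C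
      simpa using this
    exact squeeze_zero_norm' (by
      filter_upwards [Filter.eventually_ge_atTop r₀] with r hr
      simpa [Real.norm_eq_abs] using hkey r hr) htend
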